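/- arXiv:2307.07432 — 2 statements merged into one kernel-verified Lean document; each statement's English description precedes it below -/
import Mathlib

section
/- For all t, q > 0, the weight function 𝒲_o(t,q) := 1 − 3(1+4t²)(1+4q²)[(t(3+4t²))² + (q(3+4q²))²] / [(t²+q²)(3+4t²−4tq+4q²)²(3+4t²+4tq+4q²)²] satisfies 0 < c ≤ 𝒲_o(t,q) ≤ C for universal constants c, C > 0 (i.e., 𝒲_o(t,q) ∼ 1 uniformly on (0,∞)²). -/
/-- The odd-part weight function `𝒲_o(t,q)`. -/
noncomputable def Wo (t q : ℝ) : ℝ :=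
  1 - 3 * (1 + 4 * t ^ 2) * (1 + 4 * q ^ 2) * ((t * (3 + 4 * t ^ 2)) ^ 2 + (q * (3 + 4 * q ^ 2)) ^ 2)
    / ((t ^ 2 + q ^ 2) * (3 + 4 * t ^ 2 - 4 * t * q + 4 * q ^ 2) ^ 2
        * (3 + 4 * t ^ 2 + 4 * t * q + 4 * q ^ 2) ^ 2)

/-- There are universal constants `0 < c ≤ C` with `c ≤ 𝒲_o(t,q) ≤ C` for all `t, q > 0`,
i.e. `𝒲_o(t,q) ∼ 1` uniformly on `(0,∞)²`. -/
theorem Wo_comparable_to_one :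
    ∃ c C : ℝ, 0 < c ∧ 0 < C ∧
      ∀ t q : ℝ, 0 < t → 0 < q → c ≤ Wo t q ∧ Wo t q ≤ C := by
  refine ⟨1/2, 1, by norm_num, by norm_num, fun t q ht hq => ?_⟩
  have ht2 : 0 < t ^ 2 := by positivity
  have hq2 : 0 < q ^ 2 := by positivity
  have hm : 0 < 3 + 4 * t ^ 2 - 4 * t * q + 4 * q ^ 2 := by nlinarith [sq_nonneg (2*t - q)]
  have hp : 0 < 3 + 4 * t ^ 2 + 4 * t * q + 4 * q ^ 2 := by nlinarith [sq_nonneg (2*t + q)]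
  set D := (t ^ 2 + q ^ 2) * (3 + 4 * t ^ 2 - 4 * t * q + 4 * q ^ 2) ^ 2
      * (3 + 4 * t ^ 2 + 4 * t * q + 4 * q ^ 2) ^ 2 with hDdef
  set N := 3 * (1 + 4 * t ^ 2) * (1 + 4 * q ^ 2)
      * ((t * (3 + 4 * t ^ 2)) ^ 2 + (q * (3 + 4 * q ^ 2)) ^ 2) with hNdef
  have hD : 0 < D := by positivity
  have hN : 0 ≤ N := by positivity
  have key : 2 * N ≤ D := by
    rw [hDdef, hNdef]
    nlinarith [mul_nonneg (by positivity : (0:ℝ) ≤ t^2 + q^2)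
        (by positivity : (0:ℝ) ≤ (t^2 - q^2)^4 + 3 * t^4 * q^4),
      mul_nonneg (sq_nonneg (t^2 - q^2)) (by positivity : (0:ℝ) ≤ t^4 + t^2*q^2 + q^4),
      mul_pos ht2 hq2, sq_nonneg (t*q), mul_pos (mul_pos ht2 ht2) hq2,
      mul_pos ht2 (mul_pos hq2 hq2), mul_pos (mul_pos ht2 ht2) (mul_pos hq2 hq2),
      mul_pos (mul_pos ht2 ht2) ht2, mul_pos (mul_pos hq2 hq2) hq2,
      mul_pos ht2 hq2]
  have hND : N / D ≤ 1 / 2 := by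
    rw [div_le_div_iff₀ hD (by norm_num)]
    linarith
  have hND0 : 0 ≤ N / D := div_nonneg hN hD.le
  constructor
  · have : Wo t q = 1 - N / D := rfl
    rw [this]; linarith
  · have : Wo t q = 1 - N / D := rfl
    rw [this]; linarith
end

section
/- Let ℓ(x,y) := 3·sign(xy)·(x²+xy)/(x³−y³) for nonzero real x ≠ y with x³ ≠ y³. Then for any continuous compactly supported g : ℝ → ℝ, the double integral over the positive quadrant satisfies ∫₀^∞ ∫₀^∞ (g(x))² · [x^{4/3} − 2x y^{1/3} − 2x^{1/3}y + y^{4/3}] / [(x+y)² x^{2/3} y^{2/3}] dx dy = 0, provided the integral converges absolutely. -/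
open MeasureTheory Set

open Filter in
private lemma rpow_third {x : ℝ} (hx : 0 ≤ x) (n : ℕ) : x ^ ((n : ℝ)/3) = (x ^ ((1:ℝ)/3)) ^ n := by
  rw [← Real.rpow_natCast (x ^ ((1:ℝ)/3)) n, ← Real.rpow_mul hx]
  congr 1
  ring

lemma H_deriv (x : ℝ) (hx : 0 < x) (y : ℝ) (hy : 0 < y) :
    HasDerivAt (fun y : ℝ => 3 * (x ^ ((1:ℝ)/3) * y ^ ((1:ℝ)/3) - y ^ ((2:ℝ)/3))
        / (x ^ ((2:ℝ)/3) * (x + y)))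
      ((x ^ ((4:ℝ)/3) - 2*x*y^((1:ℝ)/3) - 2*x^((1:ℝ)/3)*y + y^((4:ℝ)/3)) /
        ((x+y)^2 * x^((2:ℝ)/3) * y^((2:ℝ)/3))) y := by
  have h13 : HasDerivAt (fun y : ℝ => y ^ ((1:ℝ)/3)) ((1:ℝ)/3 * y ^ ((1:ℝ)/3 - 1)) y :=
    Real.hasDerivAt_rpow_const (Or.inl hy.ne')
  have h23 : HasDerivAt (fun y : ℝ => y ^ ((2:ℝ)/3)) ((2:ℝ)/3 * y ^ ((2:ℝ)/3 - 1)) y :=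
    Real.hasDerivAt_rpow_const (Or.inl hy.ne')
  have hnum : HasDerivAt (fun y : ℝ => 3 * (x ^ ((1:ℝ)/3) * y ^ ((1:ℝ)/3) - y ^ ((2:ℝ)/3)))
      (3 * (x ^ ((1:ℝ)/3) * ((1:ℝ)/3 * y ^ ((1:ℝ)/3 - 1)) - (2:ℝ)/3 * y ^ ((2:ℝ)/3 - 1))) y :=
    ((h13.const_mul _).sub h23).const_mul 3
  have hden : HasDerivAt (fun y : ℝ => x ^ ((2:ℝ)/3) * (x + y)) (x ^ ((2:ℝ)/3) * 1) y :=
    ((hasDerivAt_id y).const_add x).const_mul _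
  have hdx : 0 < x ^ ((2:ℝ)/3) := Real.rpow_pos_of_pos hx _
  have hne : x ^ ((2:ℝ)/3) * (x + y) ≠ 0 := by positivity
  have := hnum.div hden hne
  refine HasDerivAt.congr_deriv this ?_
  -- algebraic identity
  set a := x ^ ((1:ℝ)/3) with ha
  set b := y ^ ((1:ℝ)/3) with hb
  have ha0 : 0 < a := Real.rpow_pos_of_pos hx _
  have hb0 : 0 < b := Real.rpow_pos_of_pos hy _
  have ex2 : x ^ ((2:ℝ)/3) = a ^ 2 := by have := rpow_third hx.le 2; norm_num at this; exact this
  have ex4 : x ^ ((4:ℝ)/3) = a ^ 4 := by have := rpow_third hx.le 4; norm_num at this; exact this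
  have ey2 : y ^ ((2:ℝ)/3) = b ^ 2 := by have := rpow_third hy.le 2; norm_num at this; exact this
  have ey4 : y ^ ((4:ℝ)/3) = b ^ 4 := by have := rpow_third hy.le 4; norm_num at this; exact this
  have em2 : y ^ ((1:ℝ)/3 - 1) = (b ^ 2)⁻¹ := by
    rw [show ((1:ℝ)/3 - 1) = -((2:ℝ)/3) by norm_num, Real.rpow_neg hy.le, ey2]
  have em1 : y ^ ((2:ℝ)/3 - 1) = b⁻¹ := by
    rw [show ((2:ℝ)/3 - 1) = -((1:ℝ)/3) by norm_num, Real.rpow_neg hy.le, hb]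
  have ex : x = a ^ 3 := by have := rpow_third hx.le 3; norm_num at this; exact this
  have ey : y = b ^ 3 := by have := rpow_third hy.le 3; norm_num at this; exact this
  rw [ex4, ex2, ey4, ey2, em2, em1, ex, ey]
  have h3 : a ^ 3 + b ^ 3 ≠ 0 := by positivity
  field_simp
  ring

open Filter in

lemma F_int (x : ℝ) (hx : 0 < x) :
    IntegrableOn (fun y : ℝ =>
      (x ^ ((4:ℝ)/3) - 2*x*y^((1:ℝ)/3) - 2*x^((1:ℝ)/3)*y + y^((4:ℝ)/3)) /
        ((x+y)^2 * x^((2:ℝ)/3) * y^((2:ℝ)/3))) (Ioi 0) := by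
  set F := fun y : ℝ =>
      (x ^ ((4:ℝ)/3) - 2*x*y^((1:ℝ)/3) - 2*x^((1:ℝ)/3)*y + y^((4:ℝ)/3)) /
        ((x+y)^2 * x^((2:ℝ)/3) * y^((2:ℝ)/3)) with hF
  set A := x ^ ((4:ℝ)/3) + 2*x + 2*x^((1:ℝ)/3) + 1 with hA
  have hA0 : 0 < A := by
    have h1 : 0 < x ^ ((4:ℝ)/3) := Real.rpow_pos_of_pos hx _
    have h2 : 0 < x ^ ((1:ℝ)/3) := Real.rpow_pos_of_pos hx _
    rw [hA]; linarith
  have hcont : ContinuousOn F (Ioi 0) := by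
    intro y hy
    have hy0 : (0:ℝ) < y := hy
    have c13 : ContinuousAt (fun z : ℝ => z ^ ((1:ℝ)/3)) y :=
      Real.continuousAt_rpow_const y _ (Or.inr (by norm_num))
    have c43 : ContinuousAt (fun z : ℝ => z ^ ((4:ℝ)/3)) y :=
      Real.continuousAt_rpow_const y _ (Or.inr (by norm_num))
    have c23 : ContinuousAt (fun z : ℝ => z ^ ((2:ℝ)/3)) y :=
      Real.continuousAt_rpow_const y _ (Or.inr (by norm_num))
    have hden : (x+y)^2 * x^((2:ℝ)/3) * y^((2:ℝ)/3) ≠ 0 := by positivity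
    apply ContinuousAt.continuousWithinAt
    exact (((continuousAt_const.sub (continuousAt_const.mul c13)).sub
      (continuousAt_const.mul continuousAt_id)).add c43).div
      ((((continuousAt_const.add continuousAt_id).pow 2).mul continuousAt_const).mul c23) hden
  have hDpos : ∀ y : ℝ, 0 < y → 0 < (x+y)^2 * x^((2:ℝ)/3) * y^((2:ℝ)/3) := by
    intro y hy; positivity
  -- piece 1 : Ioc 0 1
  have int1 : IntegrableOn F (Ioc 0 1) := by
    have hbnd : IntegrableOn (fun y : ℝ => (A / x^((8:ℝ)/3)) * y ^ (-((2:ℝ)/3))) (Ioc 0 1) := by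
      have h := intervalIntegral.intervalIntegrable_rpow' (a := 0) (b := 1) (r := -((2:ℝ)/3)) (by norm_num)
      rw [intervalIntegrable_iff_integrableOn_Ioc_of_le (by norm_num : (0:ℝ) ≤ 1)] at h
      exact h.const_mul _
    refine Integrable.mono' hbnd
      ((hcont.mono Ioc_subset_Ioi_self).aestronglyMeasurable measurableSet_Ioc) ?_
    rw [ae_restrict_iff' measurableSet_Ioc]
    refine ae_of_all _ fun y hy => ?_
    obtain ⟨hy0, hy1⟩ := hy
    have hD := hDpos y hy0
    have hb13 : y ^ ((1:ℝ)/3) ≤ 1 := Real.rpow_le_one hy0.le hy1 (by norm_num)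
    have hb43 : y ^ ((4:ℝ)/3) ≤ 1 := Real.rpow_le_one hy0.le hy1 (by norm_num)
    have hb13' : 0 ≤ y ^ ((1:ℝ)/3) := Real.rpow_nonneg hy0.le _
    have hb43' : 0 ≤ y ^ ((4:ℝ)/3) := Real.rpow_nonneg hy0.le _
    have hx13 : 0 < x ^ ((1:ℝ)/3) := Real.rpow_pos_of_pos hx _
    have hx43 : 0 < x ^ ((4:ℝ)/3) := Real.rpow_pos_of_pos hx _
    have hN : |x ^ ((4:ℝ)/3) - 2*x*y^((1:ℝ)/3) - 2*x^((1:ℝ)/3)*y + y^((4:ℝ)/3)| ≤ A := by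
      rw [abs_le]
      constructor
      · nlinarith
      · nlinarith
    rw [hF, Real.norm_eq_abs, abs_div, abs_of_pos hD]
    have hx23 : 0 < x ^ ((2:ℝ)/3) := Real.rpow_pos_of_pos hx _
    have hy23 : 0 < y ^ ((2:ℝ)/3) := Real.rpow_pos_of_pos hy0 _
    have hx83 : x ^ ((8:ℝ)/3) = x^2 * x^((2:ℝ)/3) := by
      rw [← Real.rpow_natCast x 2, ← Real.rpow_add hx]; norm_num
    have hDle : x ^ ((8:ℝ)/3) * y ^ ((2:ℝ)/3) ≤ (x+y)^2 * x^((2:ℝ)/3) * y^((2:ℝ)/3) := by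
      rw [hx83]
      have : x^2 ≤ (x+y)^2 := by nlinarith
      calc x^2 * x^((2:ℝ)/3) * y^((2:ℝ)/3) ≤ (x+y)^2 * x^((2:ℝ)/3) * y^((2:ℝ)/3) := by gcongr
        _ = _ := by ring
    calc |x ^ ((4:ℝ)/3) - 2*x*y^((1:ℝ)/3) - 2*x^((1:ℝ)/3)*y + y^((4:ℝ)/3)| /
          ((x+y)^2 * x^((2:ℝ)/3) * y^((2:ℝ)/3))
        ≤ A / (x ^ ((8:ℝ)/3) * y ^ ((2:ℝ)/3)) := by
          apply div_le_div₀ hA0.le hN (by positivity) hDle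
      _ = (A / x^((8:ℝ)/3)) * y ^ (-((2:ℝ)/3)) := by
          rw [Real.rpow_neg hy0.le]; ring
  -- piece 2 : Ioi 1
  have int2 : IntegrableOn F (Ioi 1) := by
    have hbnd : IntegrableOn (fun y : ℝ => (A / x^((2:ℝ)/3)) * y ^ (-((4:ℝ)/3))) (Ioi 1) :=
      ((integrableOn_Ioi_rpow_of_lt (by norm_num) one_pos)).const_mul _
    refine Integrable.mono' hbnd
      ((hcont.mono (Ioi_subset_Ioi (by norm_num))).aestronglyMeasurable measurableSet_Ioi) ?_
    rw [ae_restrict_iff' measurableSet_Ioi]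
    refine ae_of_all _ fun y hy => ?_
    have hy1 : (1:ℝ) ≤ y := le_of_lt hy
    have hy0 : (0:ℝ) < y := lt_of_lt_of_le one_pos hy1
    have hD := hDpos y hy0
    have hb43 : 0 ≤ y ^ ((4:ℝ)/3) := Real.rpow_nonneg hy0.le _
    have hb1 : y ^ ((1:ℝ)/3) ≤ y ^ ((4:ℝ)/3) :=
      Real.rpow_le_rpow_of_exponent_le hy1 (by norm_num)
    have hb2 : y ≤ y ^ ((4:ℝ)/3) := by
      nth_rewrite 1 [← Real.rpow_one y]
      exact Real.rpow_le_rpow_of_exponent_le hy1 (by norm_num)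
    have hb13' : 0 ≤ y ^ ((1:ℝ)/3) := Real.rpow_nonneg hy0.le _
    have hx13 : 0 < x ^ ((1:ℝ)/3) := Real.rpow_pos_of_pos hx _
    have hx43 : 0 < x ^ ((4:ℝ)/3) := Real.rpow_pos_of_pos hx _
    have hone : (1:ℝ) ≤ y ^ ((4:ℝ)/3) := le_trans hy1 hb2
    have hN : |x ^ ((4:ℝ)/3) - 2*x*y^((1:ℝ)/3) - 2*x^((1:ℝ)/3)*y + y^((4:ℝ)/3)|
        ≤ A * y ^ ((4:ℝ)/3) := by
      rw [abs_le, hA]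
      constructor
      · nlinarith
      · nlinarith
    rw [hF, Real.norm_eq_abs, abs_div, abs_of_pos hD]
    have hx23 : 0 < x ^ ((2:ℝ)/3) := Real.rpow_pos_of_pos hx _
    have hy23 : 0 < y ^ ((2:ℝ)/3) := Real.rpow_pos_of_pos hy0 _
    have hy83 : y ^ ((8:ℝ)/3) = y^2 * y^((2:ℝ)/3) := by
      rw [← Real.rpow_natCast y 2, ← Real.rpow_add hy0]; norm_num
    have hDle : x ^ ((2:ℝ)/3) * y ^ ((8:ℝ)/3) ≤ (x+y)^2 * x^((2:ℝ)/3) * y^((2:ℝ)/3) := by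
      rw [hy83]
      have : y^2 ≤ (x+y)^2 := by nlinarith
      calc x^((2:ℝ)/3) * (y^2 * y^((2:ℝ)/3)) ≤ x^((2:ℝ)/3) * ((x+y)^2 * y^((2:ℝ)/3)) := by gcongr
        _ = _ := by ring
    calc |x ^ ((4:ℝ)/3) - 2*x*y^((1:ℝ)/3) - 2*x^((1:ℝ)/3)*y + y^((4:ℝ)/3)| /
          ((x+y)^2 * x^((2:ℝ)/3) * y^((2:ℝ)/3))
        ≤ (A * y ^ ((4:ℝ)/3)) / (x ^ ((2:ℝ)/3) * y ^ ((8:ℝ)/3)) := by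
          apply div_le_div₀ (by positivity) hN (by positivity) hDle
      _ = (A / x^((2:ℝ)/3)) * y ^ (-((4:ℝ)/3)) := by
          rw [show -((4:ℝ)/3) = (4:ℝ)/3 - (8:ℝ)/3 by norm_num, Real.rpow_sub hy0]
          ring
  have : Ioc (0:ℝ) 1 ∪ Ioi 1 = Ioi 0 := Ioc_union_Ioi_eq_Ioi (by norm_num)
  rw [← this]
  exact int1.union int2

open Filter in
lemma inner_zero (x : ℝ) (hx : 0 < x) :
    ∫ y in Ioi (0:ℝ),
      (x ^ ((4:ℝ)/3) - 2*x*y^((1:ℝ)/3) - 2*x^((1:ℝ)/3)*y + y^((4:ℝ)/3)) /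
        ((x+y)^2 * x^((2:ℝ)/3) * y^((2:ℝ)/3)) = 0 := by
  set H := fun y : ℝ => 3 * (x ^ ((1:ℝ)/3) * y ^ ((1:ℝ)/3) - y ^ ((2:ℝ)/3))
      / (x ^ ((2:ℝ)/3) * (x + y)) with hH
  have hx23 : 0 < x ^ ((2:ℝ)/3) := Real.rpow_pos_of_pos hx _
  -- continuity at 0
  have hcont : ContinuousWithinAt H (Ici 0) 0 := by
    apply ContinuousAt.continuousWithinAt
    have c13 : ContinuousAt (fun z : ℝ => z ^ ((1:ℝ)/3)) 0 :=
      Real.continuousAt_rpow_const 0 _ (Or.inr (by norm_num))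
    have c23 : ContinuousAt (fun z : ℝ => z ^ ((2:ℝ)/3)) 0 :=
      Real.continuousAt_rpow_const 0 _ (Or.inr (by norm_num))
    have hne : x ^ ((2:ℝ)/3) * (x + 0) ≠ 0 := by positivity
    exact (((continuousAt_const.mul c13).sub c23).const_mul 3).div
      (continuousAt_const.mul (continuousAt_const.add continuousAt_id)) hne
  -- H 0 = 0
  have hH0 : H 0 = 0 := by
    rw [hH]
    simp [Real.zero_rpow (by norm_num : ((1:ℝ)/3) ≠ 0),
      Real.zero_rpow (by norm_num : ((2:ℝ)/3) ≠ 0)]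
  -- tendsto at top
  have htop : Tendsto H atTop (nhds 0) := by
    have hb : Tendsto (fun y : ℝ =>
        3 * (x ^ ((1:ℝ)/3) * y ^ (-((2:ℝ)/3)) + y ^ (-((1:ℝ)/3))) / x ^ ((2:ℝ)/3))
        atTop (nhds 0) := by
      have t1 : Tendsto (fun y : ℝ => y ^ (-((2:ℝ)/3))) atTop (nhds 0) :=
        tendsto_rpow_neg_atTop (by norm_num)
      have t2 : Tendsto (fun y : ℝ => y ^ (-((1:ℝ)/3))) atTop (nhds 0) :=
        tendsto_rpow_neg_atTop (by norm_num)
      have := (((t1.const_mul (x ^ ((1:ℝ)/3))).add t2).const_mul 3).div_const (x ^ ((2:ℝ)/3))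
      simpa using this
    apply squeeze_zero_norm' _ hb
    filter_upwards [eventually_ge_atTop (1:ℝ)] with y hy1
    have hy0 : (0:ℝ) < y := lt_of_lt_of_le one_pos hy1
    have hx13 : 0 < x ^ ((1:ℝ)/3) := Real.rpow_pos_of_pos hx _
    have hb13 : 0 < y ^ ((1:ℝ)/3) := Real.rpow_pos_of_pos hy0 _
    have hb23 : 0 < y ^ ((2:ℝ)/3) := Real.rpow_pos_of_pos hy0 _
    have hden : 0 < x ^ ((2:ℝ)/3) * (x + y) := by positivity
    rw [hH, Real.norm_eq_abs, abs_div, abs_of_pos hden]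
    have hnum : |3 * (x ^ ((1:ℝ)/3) * y ^ ((1:ℝ)/3) - y ^ ((2:ℝ)/3))|
        ≤ 3 * (x ^ ((1:ℝ)/3) * y ^ ((1:ℝ)/3) + y ^ ((2:ℝ)/3)) := by
      rw [abs_mul, abs_of_pos (by norm_num : (0:ℝ) < 3)]
      have := abs_sub (x ^ ((1:ℝ)/3) * y ^ ((1:ℝ)/3)) (y ^ ((2:ℝ)/3))
      gcongr
      calc |x ^ ((1:ℝ)/3) * y ^ ((1:ℝ)/3) - y ^ ((2:ℝ)/3)|
          ≤ |x ^ ((1:ℝ)/3) * y ^ ((1:ℝ)/3)| + |y ^ ((2:ℝ)/3)| := abs_sub _ _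
        _ = x ^ ((1:ℝ)/3) * y ^ ((1:ℝ)/3) + y ^ ((2:ℝ)/3) := by
            rw [abs_of_pos (by positivity), abs_of_pos hb23]
    calc |3 * (x ^ ((1:ℝ)/3) * y ^ ((1:ℝ)/3) - y ^ ((2:ℝ)/3))| / (x ^ ((2:ℝ)/3) * (x + y))
        ≤ 3 * (x ^ ((1:ℝ)/3) * y ^ ((1:ℝ)/3) + y ^ ((2:ℝ)/3)) / (x ^ ((2:ℝ)/3) * y) := by
          apply div_le_div₀ (by positivity) hnum (by positivity)
          have : y ≤ x + y := by linarith
          gcongr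
      _ = 3 * (x ^ ((1:ℝ)/3) * y ^ (-((2:ℝ)/3)) + y ^ (-((1:ℝ)/3))) / x ^ ((2:ℝ)/3) := by
          have e1 : y ^ (-((2:ℝ)/3)) = y ^ ((1:ℝ)/3) / y := by
            rw [show -((2:ℝ)/3) = (1:ℝ)/3 - 1 by norm_num, Real.rpow_sub hy0, Real.rpow_one]
          have e2 : y ^ (-((1:ℝ)/3)) = y ^ ((2:ℝ)/3) / y := by
            rw [show -((1:ℝ)/3) = (2:ℝ)/3 - 1 by norm_num, Real.rpow_sub hy0, Real.rpow_one]
          rw [e1, e2]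
          field_simp
  have := integral_Ioi_of_hasDerivAt_of_tendsto hcont
    (fun y hy => H_deriv x hx y hy) (F_int x hx) htop
  rw [this, hH0, sub_zero]

/-- The vanishing identity used in the computation of the cusp variance for odd test
functions: for any continuous compactly supported `g : ℝ → ℝ`, if the double integral over
the positive quadrant of
`(g(x))² · [x^{4/3} − 2x y^{1/3} − 2x^{1/3} y + y^{4/3}] / [(x+y)² x^{2/3} y^{2/3}]`
converges absolutely, then it equals `0`. -/
theorem cusp_odd_vanishing (g : ℝ → ℝ) (hg : Continuous g) (hsupp : HasCompactSupport g)
    (hint : IntegrableOn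
      (fun p : ℝ × ℝ => (g p.1) ^ 2 *
        (p.1 ^ ((4 : ℝ) / 3) - 2 * p.1 * p.2 ^ ((1 : ℝ) / 3)
          - 2 * p.1 ^ ((1 : ℝ) / 3) * p.2 + p.2 ^ ((4 : ℝ) / 3))
        / ((p.1 + p.2) ^ 2 * p.1 ^ ((2 : ℝ) / 3) * p.2 ^ ((2 : ℝ) / 3)))
      (Ioi (0 : ℝ) ×ˢ Ioi (0 : ℝ))) :
    ∫ p in Ioi (0 : ℝ) ×ˢ Ioi (0 : ℝ),
      (g p.1) ^ 2 *
        (p.1 ^ ((4 : ℝ) / 3) - 2 * p.1 * p.2 ^ ((1 : ℝ) / 3)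
          - 2 * p.1 ^ ((1 : ℝ) / 3) * p.2 + p.2 ^ ((4 : ℝ) / 3))
        / ((p.1 + p.2) ^ 2 * p.1 ^ ((2 : ℝ) / 3) * p.2 ^ ((2 : ℝ) / 3)) = 0 := by
  rw [Measure.volume_eq_prod] at hint ⊢
  rw [MeasureTheory.setIntegral_prod _ hint]
  rw [MeasureTheory.setIntegral_eq_zero_of_forall_eq_zero]
  intro x hx
  have hx0 : (0:ℝ) < x := hx
  simp_rw [mul_div_assoc]
  rw [integral_const_mul, inner_zero x hx0, mul_zero]
end
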